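/- FIFO merge determinism: given the sender's emission sequence (a finite list of events, each a data item or a signal) and the credit-protocol rules, the receiver's maximal consumption behavior is deterministic up to the number of data items consumed per step: any two complete executions of the protocol on the same emission sequence consume the same multiset, in the same order, of events. In particular the final state has empty data and signal queues and zero credit counter. -/
import Mathlib


/-- Events: data items or signals. -/
inductive Ev
  | data (v : ℕ)
  | sig (id : ℕ)
deriving DecidableEq

/-- Channel state of the credit protocol with explicit FIFO queues and
emission/consumption logs. -/
structure CState where
  emitted : List Ev
  consumed : List Ev
  Q : List ℕ
  S : List (ℕ × ℕ)
  c : ℕ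
  k : ℕ

/-- Receiver transitions of the credit protocol. -/
inductive RecvStep : CState → CState → Prop
  | consumeData (s : CState) (v : ℕ) (Q' : List ℕ)
      (hQ : s.Q = v :: Q') (h : s.S = [] ∨ 0 < s.c) :
      RecvStep s { s with consumed := s.consumed ++ [.data v], Q := Q',
                          c := if s.S = [] then s.c else s.c - 1 }
  | transfer (s : CState) (i h : ℕ) (S' : List (ℕ × ℕ))
      (hS : s.S = (i, h) :: S') (hc : s.c = 0) (hh : 0 < h) :
      RecvStep s { s with S := (i, 0) :: S', c := h }
  | consumeSignal (s : CState) (i : ℕ) (S' : List (ℕ × ℕ))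
      (hS : s.S = (i, 0) :: S') (hc : s.c = 0) :
      RecvStep s { s with consumed := s.consumed ++ [.sig i], S := S' }

/-- All transitions: sender emissions plus receiver steps. -/
inductive CStep : CState → CState → Prop
  | emitData (s : CState) (v : ℕ) :
      CStep s { s with emitted := s.emitted ++ [.data v],
                       Q := s.Q ++ [v], k := s.k + 1 }
  | emitSignal (s : CState) (i : ℕ) :
      CStep s { s with emitted := s.emitted ++ [.sig i],
                       S := s.S ++ [(i, if s.S = [] then s.Q.length else s.k)],
                       k := 0 }
  | recv (s s' : CState) (h : RecvStep s s') : CStep s s'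

/-- Initial state. -/
def initC : CState := ⟨[], [], [], [], 0, 0⟩


/-- sum of pending data counts attached to signals -/
def sumH (S : List (ℕ × ℕ)) : ℕ := (S.map Prod.snd).sum

@[simp] lemma sumH_nil : sumH [] = 0 := rfl
@[simp] lemma sumH_cons (i h : ℕ) (S : List (ℕ × ℕ)) :
    sumH ((i, h) :: S) = h + sumH S := by simp [sumH]
@[simp] lemma sumH_append (S T : List (ℕ × ℕ)) :
    sumH (S ++ T) = sumH S + sumH T := by simp [sumH]

/-- pending (not yet consumed) event sequence reconstructed from queues -/
def pend : List ℕ → List (ℕ × ℕ) → ℕ → List Ev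
  | Q, [], _ => Q.map Ev.data
  | Q, (i, h) :: S', c =>
      (Q.take (c + h)).map Ev.data ++ Ev.sig i :: pend (Q.drop (c + h)) S' 0

lemma pend_append_data (Q : List ℕ) (S : List (ℕ × ℕ)) (c v : ℕ)
    (hle : c + sumH S ≤ Q.length) :
    pend (Q ++ [v]) S c = pend Q S c ++ [Ev.data v] := by
  induction S generalizing Q c with
  | nil => simp [pend]
  | cons p S' ih =>
    obtain ⟨i, h⟩ := p
    have hch : c + h ≤ Q.length := by simp at hle; omega
    have hrec : 0 + sumH S' ≤ (Q.drop (c + h)).length := by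
      simp at hle ⊢; omega
    simp only [pend, List.take_append_of_le_length hch,
      List.drop_append_of_le_length hch, ih _ _ hrec]
    simp

lemma pend_append_sig (Q : List ℕ) (S : List (ℕ × ℕ)) (c i h₀ : ℕ)
    (hlen : Q.length = c + sumH S + h₀) :
    pend Q (S ++ [(i, h₀)]) c = pend Q S c ++ [Ev.sig i] := by
  induction S generalizing Q c with
  | nil =>
    simp only [sumH_nil, Nat.add_zero, Nat.zero_add] at hlen
    simp [pend, List.take_of_length_le hlen.le,
      List.drop_eq_nil_of_le hlen.le]
  | cons p S' ih =>
    obtain ⟨j, h⟩ := p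
    have hrec : (Q.drop (c + h)).length = 0 + sumH S' + h₀ := by
      simp at hlen ⊢; omega
    rw [List.cons_append]
    simp only [pend]
    rw [ih _ _ hrec]
    simp

/-- protocol invariant -/
def CInv (s : CState) : Prop :=
  s.emitted = s.consumed ++ pend s.Q s.S s.c ∧
  (s.S ≠ [] → s.Q.length = s.c + sumH s.S + s.k) ∧
  (s.S = [] → s.c = 0)

lemma CInv.le {s : CState} (hs : CInv s) : s.c + sumH s.S ≤ s.Q.length := by
  obtain ⟨-, hL, hc0⟩ := hs
  cases hS : s.S with
  | nil => simp [hc0 hS]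
  | cons p S' =>
    have := hL (by simp [hS])
    rw [hS] at this
    omega

lemma cinv_step {s s' : CState} (h : CStep s s') (hs : CInv s) : CInv s' := by
  have hle := hs.le
  obtain ⟨hE, hL, hc0⟩ := hs
  cases h with
  | emitData v =>
    refine ⟨?_, ?_, ?_⟩
    · show s.emitted ++ [Ev.data v] = s.consumed ++ pend (s.Q ++ [v]) s.S s.c
      rw [pend_append_data _ _ _ _ hle, hE, List.append_assoc]
    · intro hS
      have hS' : s.S ≠ [] := hS
      show (s.Q ++ [v]).length = s.c + sumH s.S + (s.k + 1)
      have := hL hS'; simp; omega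
    · intro hS
      exact hc0 hS
  | emitSignal i =>
    have hlen : s.Q.length = s.c + sumH s.S + (if s.S = [] then s.Q.length else s.k) := by
      by_cases hS : s.S = []
      · simp [hS, hc0 hS]
      · rw [if_neg hS]
        have := hL hS
        omega
    refine ⟨?_, ?_, ?_⟩
    · show s.emitted ++ [Ev.sig i] = s.consumed ++
        pend s.Q (s.S ++ [(i, if s.S = [] then s.Q.length else s.k)]) s.c
      rw [pend_append_sig _ _ _ _ _ hlen, hE, List.append_assoc]
    · intro _
      show s.Q.length = s.c + sumH (s.S ++ [(i, if s.S = [] then s.Q.length else s.k)]) + 0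
      simp; omega
    · intro hS
      have hS' : s.S ++ [(i, if s.S = [] then s.Q.length else s.k)] = [] := hS
      simp at hS'
  | recv s' hr =>
    cases hr with
    | consumeData v Q' hQ hor =>
      rcases hor with hS | hcpos
      · have hc : s.c = 0 := hc0 hS
        refine ⟨?_, ?_, ?_⟩
        · show s.emitted = (s.consumed ++ [Ev.data v]) ++
            pend Q' s.S (if s.S = [] then s.c else s.c - 1)
          rw [hE, hQ, hS]
          simp [pend]
        · intro h'
          have h'' : s.S ≠ [] := h'
          exact absurd hS h''
        · intro _
          show (if s.S = [] then s.c else s.c - 1) = 0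
          simp [hS, hc]
      · have hSne : s.S ≠ [] := by
          intro hS; have := hc0 hS; omega
        obtain ⟨⟨j, h⟩, S', hS⟩ : ∃ p S', s.S = p :: S' := by
          cases hS : s.S with
          | nil => exact absurd hS hSne
          | cons p S' => exact ⟨p, S', rfl⟩
        refine ⟨?_, ?_, ?_⟩
        · show s.emitted = (s.consumed ++ [Ev.data v]) ++
            pend Q' s.S (if s.S = [] then s.c else s.c - 1)
          rw [hE, hQ, if_neg hSne, hS]
          simp only [pend]
          have hcr : s.c + h = (s.c - 1 + h) + 1 := by omega
          rw [hcr]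
          simp [List.append_assoc]
        · intro _
          show Q'.length = (if s.S = [] then s.c else s.c - 1) + sumH s.S + s.k
          have := hL hSne
          rw [hQ] at this
          rw [if_neg hSne]
          simp only [List.length_cons] at this
          omega
        · intro h'
          have h'' : s.S = [] := h'
          exact absurd h'' hSne
    | transfer i h S' hS hc hh =>
      refine ⟨?_, ?_, ?_⟩
      · show s.emitted = s.consumed ++ pend s.Q ((i, 0) :: S') h
        rw [hE, hS]
        simp [pend, hc, Nat.add_comm]
      · intro _
        show s.Q.length = h + sumH ((i, 0) :: S') + s.k
        have := hL (by simp [hS]); rw [hS] at this; simp at this ⊢; omega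
      · intro h'
        have h'' : ((i, 0) :: S' : List (ℕ × ℕ)) = [] := h'
        simp at h''
    | consumeSignal i S' hS hc =>
      refine ⟨?_, ?_, ?_⟩
      · show s.emitted = (s.consumed ++ [Ev.sig i]) ++ pend s.Q S' s.c
        rw [hE, hS]
        simp [pend, hc]
      · intro _
        show s.Q.length = s.c + sumH S' + s.k
        have := hL (by simp [hS]); rw [hS] at this; simp at this ⊢; omega
      · intro _
        show s.c = 0
        exact hc

lemma cinv_reach {s : CState} (h : Relation.ReflTransGen CStep initC s) : CInv s := by
  induction h with
  | refl => exact ⟨rfl, by simp [initC], fun _ => rfl⟩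
  | tail _ hstep ih => exact cinv_step hstep ih

/-- determinism of complete executions: in any reachable state
of the credit protocol in which the sender has emitted exactly the sequence
`e` and no receiver transition remains enabled (a complete execution), the
receiver's consumption sequence equals `e` itself — data and signals are
consumed in exactly the order emitted — and the final channel state is empty
with a zero credit counter. -/
theorem complete_execution_deterministic (e : List Ev) (s : CState)
    (hreach : Relation.ReflTransGen CStep initC s)
    (hemit : s.emitted = e)
    (hstuck : ¬ ∃ s', RecvStep s s') :
    s.consumed = e ∧ s.Q = [] ∧ s.S = [] ∧ s.c = 0 := by
  have hinv := cinv_reach hreach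
  obtain ⟨hE, hL, hc0⟩ := hinv
  cases hS : s.S with
  | cons p S' =>
    exfalso
    obtain ⟨i, h⟩ := p
    apply hstuck
    by_cases hc : s.c = 0
    · rcases Nat.eq_zero_or_pos h with h0 | hpos
      · subst h0
        exact ⟨_, RecvStep.consumeSignal s i S' hS hc⟩
      · exact ⟨_, RecvStep.transfer s i h S' hS hc hpos⟩
    · have hcpos : 0 < s.c := Nat.pos_of_ne_zero hc
      have hlen := hL (by simp [hS])
      cases hQ : s.Q with
      | nil => rw [hQ] at hlen; simp at hlen; omega
      | cons v Q' => exact ⟨_, RecvStep.consumeData s v Q' hQ (Or.inr hcpos)⟩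
  | nil =>
    have hc : s.c = 0 := hc0 hS
    cases hQ : s.Q with
    | cons v Q' =>
      exact absurd ⟨_, RecvStep.consumeData s v Q' hQ (Or.inl hS)⟩ hstuck
    | nil =>
      rw [hQ, hS] at hE
      simp [pend] at hE
      exact ⟨hE.symm.trans hemit, rfl, rfl, hc⟩
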